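/- Let b ∈ [0,1] be a real number. Then b is rational if and only if ⌈(n-1)b⌉ ≤ ⌊nb⌋ for all sufficiently large and divisible integers n (i.e., there exists a positive integer m such that ⌈(n-1)b⌉ ≤ ⌊nb⌋ for every n that is a positive multiple of m). -/

import Mathlib

/-- Forward direction helper: if `nb` equals an integer `k` and `b ≥ 0`, the key
inequality holds. -/
private lemma stmt8_aux_int {b : ℝ} (hb0 : 0 ≤ b) {n : ℕ} {k : ℤ}
    (h : (n : ℝ) * b = (k : ℝ)) :
    ⌈((n:ℝ) - 1) * b⌉ ≤ ⌊(n:ℝ) * b⌋ := by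
  have hfl : ⌊(n:ℝ) * b⌋ = k := by rw [h]; exact Int.floor_intCast k
  rw [hfl, Int.ceil_le]
  nlinarith

/-- `b ∈ [0,1]` is rational iff `⌈(n-1)b⌉ ≤ ⌊nb⌋` for all sufficiently
large and divisible integers `n`, i.e. there is a positive integer `m`
such that the inequality holds for every positive multiple `n` of `m`. -/
theorem stmt8 (b : ℝ) (hb : b ∈ Set.Icc (0:ℝ) 1) :
    (∃ q : ℚ, b = (q : ℝ)) ↔
      ∃ m : ℕ, 0 < m ∧ ∀ n : ℕ, 0 < n → m ∣ n →
        ⌈((n:ℝ) - 1) * b⌉ ≤ ⌊(n:ℝ) * b⌋ := by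
  obtain ⟨hb0, hb1⟩ := hb
  constructor
  · rintro ⟨q, rfl⟩
    refine ⟨q.den, q.pos, fun n hn hdvd => ?_⟩
    obtain ⟨t, ht⟩ := hdvd
    refine stmt8_aux_int (by exact_mod_cast hb0) (k := t * q.num) ?_
    have key : (n : ℚ) * q = ((t * q.num : ℤ) : ℚ) := by
      rw [ht]
      push_cast
      rw [mul_comm (q.den : ℚ) (t:ℚ), mul_assoc, mul_comm (q.den : ℚ) q, Rat.mul_den_eq_num]
    exact_mod_cast key
  · rintro ⟨m, hm, H⟩
    by_contra hirr
    push_neg at hirr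
    have hIrr : Irrational b := fun ⟨q, hq⟩ => hirr q hq.symm
    have hb0' : 0 < b := lt_of_le_of_ne hb0 (fun h => (hIrr.ne_rat 0) (by simp [← h]))
    have hb1' : b < 1 := lt_of_le_of_ne hb1 (fun h => (hIrr.ne_rat 1) (by simp [h]))
    set c : ℝ := (m : ℝ) * b with hc
    -- key consequence of the hypothesis: fract (k * c) ≤ b for positive k
    have key : ∀ k : ℕ, 0 < k → Int.fract ((k : ℝ) * c) ≤ b := by
      intro k hk
      have hn : 0 < k * m := Nat.mul_pos hk hm
      have h' := H (k * m) hn ⟨k, mul_comm k m⟩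
      rw [Int.ceil_le] at h'
      have hkc : ((k * m : ℕ) : ℝ) * b = (k : ℝ) * c := by push_cast; ring
      have hfr : Int.fract ((k : ℝ) * c) = (k : ℝ) * c - ⌊(k : ℝ) * c⌋ := rfl
      rw [hkc] at h'
      have hle : (k:ℝ) * c - (⌊(k:ℝ) * c⌋ : ℝ) ≤ b := by
        have hexp : (((k * m : ℕ) : ℝ) - 1) * b = ((k * m : ℕ) : ℝ) * b - b := by ring
        linarith [h', hkc, hexp]
      rw [← Int.self_sub_floor]; exact hle
    -- the subgroup generated by 1 and c is dense
    have hm0 : (m : ℝ) ≠ 0 := by exact_mod_cast hm.ne'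
    have hcIrr : Irrational c := hIrr.natCast_mul (by exact_mod_cast hm.ne')
    have hdense : Dense ((AddSubgroup.closure ({1, c} : Set ℝ) : AddSubgroup ℝ) : Set ℝ) := by
      rcases AddSubgroup.dense_or_cyclic (AddSubgroup.closure ({1, c} : Set ℝ)) with h | ⟨a, ha⟩
      · exact h
      · exfalso
        have h1 : (1 : ℝ) ∈ AddSubgroup.closure ({1, c} : Set ℝ) :=
          AddSubgroup.subset_closure (by simp)
        have h2 : c ∈ AddSubgroup.closure ({1, c} : Set ℝ) :=
          AddSubgroup.subset_closure (by simp)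
        rw [ha, AddSubgroup.mem_closure_singleton] at h1 h2
        obtain ⟨p, hp⟩ := h1
        obtain ⟨q, hq⟩ := h2
        rw [zsmul_eq_mul] at hp hq
        have hp0 : (p : ℝ) ≠ 0 := fun h0 => one_ne_zero (hp.symm.trans (by rw [h0, zero_mul]))
        refine hcIrr ⟨(q : ℚ) / (p : ℚ), ?_⟩
        push_cast
        rw [div_eq_iff hp0]
        calc (q : ℝ) = (q : ℝ) * ((p:ℝ) * a) := by rw [hp, mul_one]
          _ = c * (p:ℝ) := by rw [← hq]; ring
    -- find an element of the subgroup in (b, 1)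
    obtain ⟨s, hsS, hsb, hs1⟩ := hdense.exists_between hb1'
    rw [SetLike.mem_coe, AddSubgroup.mem_closure_pair] at hsS
    obtain ⟨j, k, hjk⟩ := hsS
    rw [zsmul_eq_mul, zsmul_eq_mul, mul_one] at hjk
    have hs0 : 0 < s := hb0'.trans hsb
    have hfs : Int.fract s = s := Int.fract_eq_self.mpr ⟨hs0.le, hs1⟩
    have hk0 : k ≠ 0 := by
      rintro rfl
      rw [Int.cast_zero, zero_mul, add_zero] at hjk
      have h1 : (0:ℤ) < j := by exact_mod_cast hjk ▸ hs0
      have h2 : (j:ℝ) < 1 := hjk ▸ hs1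
      have h3 : (1:ℝ) ≤ (j:ℝ) := by exact_mod_cast h1
      linarith
    rcases hk0.lt_or_gt with hkneg | hkpos
    · -- k < 0 : small positive fractional part, iterate to land in (b, 1)
      set K : ℕ := (-k).toNat with hK
      have hKpos : 0 < K := by omega
      have hKcast : ((K:ℕ) : ℝ) = -(k : ℝ) := by
        have : ((K:ℕ) : ℤ) = -k := Int.toNat_of_nonneg (by omega)
        exact_mod_cast this
      set δ : ℝ := 1 - s with hδ
      have hδ0 : 0 < δ := by simp [hδ]; linarith
      have hδb : δ < 1 - b := by simp [hδ]; linarith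
      have hKc : ((K:ℕ) : ℝ) * c = ((j - 1 : ℤ) : ℝ) + δ := by
        rw [hKcast]; push_cast; linarith [hjk]
      have hfK : Int.fract (((K:ℕ) : ℝ) * c) = δ := by
        rw [hKc, Int.fract_intCast_add, Int.fract_eq_self.mpr ⟨hδ0.le, by linarith⟩]
      have hZ : ((K:ℕ) : ℝ) * c = (⌊((K:ℕ) : ℝ) * c⌋ : ℝ) + δ := by
        have := Int.self_sub_floor (((K:ℕ) : ℝ) * c)
        rw [hfK] at this; linarith
      set Z : ℤ := ⌊((K:ℕ) : ℝ) * c⌋ with hZdef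
      set t : ℕ := ⌊b / δ⌋.toNat + 1 with ht
      have hfl0 : (0:ℤ) ≤ ⌊b / δ⌋ := Int.floor_nonneg.mpr (div_nonneg hb0 hδ0.le)
      have htcast : ((t:ℕ) : ℝ) = (⌊b / δ⌋ : ℝ) + 1 := by
        have : ((t:ℕ) : ℤ) = ⌊b / δ⌋ + 1 := by rw [ht]; push_cast; omega
        exact_mod_cast this
      have ht1 : b < (t : ℝ) * δ := by
        rw [htcast, ← div_lt_iff₀ hδ0]
        exact Int.lt_floor_add_one (b / δ)
      have ht2 : (t : ℝ) * δ ≤ b + δ := by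
        have h1 : (⌊b / δ⌋ : ℝ) * δ ≤ b := by
          rw [← le_div_iff₀ hδ0]; exact Int.floor_le (b / δ)
        rw [htcast]; nlinarith
      have ht3 : (t : ℝ) * δ < 1 := by linarith
      have ht0 : (0:ℝ) ≤ (t : ℝ) * δ := by positivity
      have hfrac : Int.fract (((t * K : ℕ) : ℝ) * c) = (t : ℝ) * δ := by
        have hexp : ((t * K : ℕ) : ℝ) * c = (((t : ℤ) * Z : ℤ) : ℝ) + (t : ℝ) * δ := by
          rw [Nat.cast_mul, Int.cast_mul, Int.cast_natCast, mul_assoc, hZ]; ring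
        rw [hexp, Int.fract_intCast_add, Int.fract_eq_self.mpr ⟨ht0, ht3⟩]
      have := key (t * K) (Nat.mul_pos (by omega) hKpos)
      rw [hfrac] at this
      linarith
    · -- k > 0 : fract (k c) = s > b, contradiction
      have hkcast : ((k.toNat : ℕ) : ℝ) = (k : ℝ) := by exact_mod_cast Int.toNat_of_nonneg hkpos.le
      have hf : Int.fract (((k.toNat : ℕ) : ℝ) * c) = s := by
        rw [hkcast, (show (k:ℝ) * c = s - (j : ℝ) by linarith [hjk]), Int.fract_sub_intCast, hfs]
      have := key k.toNat (by omega)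
      rw [hf] at this
      linarith
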